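/- Let p be a prime, n ≥ 1, R a commutative ring in which p·1 = 0, and v ∈ R. Let F ∈ R⟦X,Y⟧ be a formal group law (F(X,0) = X, F(0,Y) = Y, F(X,Y) = F(Y,X), F(F(X,Y),Z) = F(X,F(Y,Z)), zero constant term) whose p-series satisfies [p]_F(X) = v·X^{p^n}, where [m]_F is defined by [0]_F = 0 and [m+1]_F(X) = F([m]_F(X), X). Then every f ∈ R⟦X⟧ with zero constant term satisfying f(F(X,Y)) = F(f(X), f(Y)) obeys f(v·X^{p^n}) = v·(f(X))^{p^n}; consequently, writing f = Σ_{m≥1} a_m X^m, one has v·a_m^{p^n} = v^m·a_m for all m ≥ 1. -/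

import Mathlib

/-- Substitution of a multivariate power series `a` (with zero constant term) for the
variable of a one-variable power series `f`; coefficientwise, the coefficient of the
monomial `d` in `f(a)` is `Σ_{m ≤ |d|} (coeff m f) · (coeff d (a^m))`, which is the usual
substitution whenever `a` has zero constant term. -/
noncomputable def substPS {R : Type} [CommRing R] {σ : Type} (a : MvPowerSeries σ R)
    (f : PowerSeries R) : MvPowerSeries σ R :=
  fun d => ∑ m ∈ Finset.range (d.sum (fun _ k => k) + 1),
    PowerSeries.coeff m f * MvPowerSeries.coeff d (a ^ m)

/-- Substitution of two power series `g₀, g₁` (with zero constant terms) for the two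
variables of `F ∈ R⟦X,Y⟧`. -/
noncomputable def subst2 {R : Type} [CommRing R] {σ : Type} (g₀ g₁ : MvPowerSeries σ R)
    (F : MvPowerSeries (Fin 2) R) : MvPowerSeries σ R :=
  fun d => ∑ i ∈ Finset.range (d.sum (fun _ k => k) + 1),
    ∑ j ∈ Finset.range (d.sum (fun _ k => k) + 1),
      MvPowerSeries.coeff (Finsupp.single (0 : Fin 2) i + Finsupp.single (1 : Fin 2) j) F *
        MvPowerSeries.coeff d (g₀ ^ i * g₁ ^ j)

open MvPowerSeries Finset

variable {R : Type} [CommRing R] {σ : Type}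

/-- total weight of an exponent -/
def wt (d : σ →₀ ℕ) : ℕ := d.sum fun _ k => k

lemma wt_add (b c : σ →₀ ℕ) : wt (b + c) = wt b + wt c :=
  Finsupp.sum_add_index' (fun _ => rfl) (fun _ _ _ => rfl)

lemma wt_zero : wt (0 : σ →₀ ℕ) = 0 := Finsupp.sum_zero_index

lemma eq_zero_of_wt_eq_zero {b : σ →₀ ℕ} (h : wt b = 0) : b = 0 := by
  ext a
  by_cases ha : a ∈ b.support
  · exact (Finset.sum_eq_zero_iff.mp h) a ha
  · simpa using Finsupp.notMem_support_iff.mp ha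

lemma one_le_wt {b : σ →₀ ℕ} (h : b ≠ 0) : 1 ≤ wt b := by
  rcases Nat.eq_zero_or_pos (wt b) with h0 | h1
  · exact absurd (eq_zero_of_wt_eq_zero h0) h
  · exact h1

lemma coeff_pow_eq_zero {a : MvPowerSeries σ R} (ha : constantCoeff a = 0) :
    ∀ (m : ℕ) (d : σ →₀ ℕ), wt d < m → MvPowerSeries.coeff d (a ^ m) = 0 := by
  intro m
  induction m with
  | zero => intro d h; omega
  | succ m ih =>
    intro d h
    classical
    rw [pow_succ, mul_comm, MvPowerSeries.coeff_mul]
    apply Finset.sum_eq_zero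
    rintro ⟨b, c⟩ hbc
    rw [Finset.HasAntidiagonal.mem_antidiagonal] at hbc
    by_cases hb : b = 0
    · subst hb
      rw [MvPowerSeries.coeff_zero_eq_constantCoeff]
      rw [ha, zero_mul]
    · have h1 : 1 ≤ wt b := one_le_wt hb
      have : wt c < m := by
        have := wt_add b c
        rw [hbc] at this
        omega
      rw [ih c this, mul_zero]

lemma coeff_mul_pow_eq_zero {g₀ g₁ : MvPowerSeries σ R}
    (h₀ : constantCoeff g₀ = 0) (h₁ : constantCoeff g₁ = 0)
    {i j : ℕ} {d : σ →₀ ℕ} (h : wt d < i + j) :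
    MvPowerSeries.coeff d (g₀ ^ i * g₁ ^ j) = 0 := by
  classical
  rw [MvPowerSeries.coeff_mul]
  apply Finset.sum_eq_zero
  rintro ⟨b, c⟩ hbc
  dsimp only
  rw [Finset.HasAntidiagonal.mem_antidiagonal] at hbc
  have hw : wt b + wt c < i + j := by rw [← wt_add, hbc]; exact h
  rcases lt_or_ge (wt b) i with hb | hb
  · rw [coeff_pow_eq_zero h₀ i b hb, zero_mul]
  · rw [coeff_pow_eq_zero h₁ j c (by omega), mul_zero]

/-! ### The exponent `E i j` and two-variable machinery -/

noncomputable def E (i j : ℕ) : Fin 2 →₀ ℕ := Finsupp.single 0 i + Finsupp.single 1 j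

lemma E_apply0 (i j : ℕ) : E i j 0 = i := by
  simp [E, Finsupp.single_apply]

lemma E_apply1 (i j : ℕ) : E i j 1 = j := by
  simp [E, Finsupp.single_apply]

lemma E_eta (e : Fin 2 →₀ ℕ) : E (e 0) (e 1) = e := by
  ext x
  match x with
  | 0 => rw [E_apply0]
  | 1 => rw [E_apply1]

lemma E_eq_iff {i j : ℕ} {e : Fin 2 →₀ ℕ} : E i j = e ↔ i = e 0 ∧ j = e 1 := by
  constructor
  · rintro rfl; exact ⟨(E_apply0 i j).symm, (E_apply1 i j).symm⟩
  · rintro ⟨rfl, rfl⟩; exact E_eta e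

lemma wt_E (i j : ℕ) : wt (E i j) = i + j := by
  rw [E, wt_add]
  show (Finsupp.single (0 : Fin 2) i).sum (fun _ k => k) +
    (Finsupp.single (1 : Fin 2) j).sum (fun _ k => k) = i + j
  rw [Finsupp.sum_single_index rfl, Finsupp.sum_single_index rfl]

lemma wt_fin2 (e : Fin 2 →₀ ℕ) : wt e = e 0 + e 1 := by
  conv_lhs => rw [← E_eta e]
  rw [wt_E]

lemma prod_E {M : Type*} [CommMonoid M] (g₀ g₁ : M) (i j : ℕ) :
    (E i j).prod (fun n k => (if n = 0 then g₀ else g₁) ^ k) = g₀ ^ i * g₁ ^ j := by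
  rw [E, Finsupp.prod_add_index' (fun a => pow_zero _) (fun a b c => pow_add _ _ _)]
  simp [Finsupp.prod_single_index]

/-- coefficient of subst2, by definition -/
lemma coeff_subst2 (g₀ g₁ : MvPowerSeries σ R) (F : MvPowerSeries (Fin 2) R) (d : σ →₀ ℕ) :
    MvPowerSeries.coeff d (subst2 g₀ g₁ F) =
      ∑ i ∈ range (wt d + 1), ∑ j ∈ range (wt d + 1),
        MvPowerSeries.coeff (E i j) F * MvPowerSeries.coeff d (g₀ ^ i * g₁ ^ j) := rfl

/-- the evaluation ring hom used to re-express `subst2` -/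
noncomputable def phi2 (g₀ g₁ : MvPowerSeries σ R) :
    MvPolynomial (Fin 2) R →+* MvPowerSeries σ R :=
  MvPolynomial.eval₂Hom (MvPowerSeries.C) (fun n => if n = 0 then g₀ else g₁)

lemma coeff_phi2_monomial (g₀ g₁ : MvPowerSeries σ R) (e : Fin 2 →₀ ℕ) (r : R) (d : σ →₀ ℕ) :
    MvPowerSeries.coeff d (phi2 g₀ g₁ (MvPolynomial.monomial e r)) =
      r * MvPowerSeries.coeff d (g₀ ^ (e 0) * g₁ ^ (e 1)) := by
  rw [phi2, MvPolynomial.eval₂Hom_monomial]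
  conv_lhs => rw [← E_eta e]
  rw [prod_E, MvPowerSeries.coeff_C_mul]

/-- rectangular truncation of a 2-variable power series -/
noncomputable def trunc2 (N : ℕ) (P : MvPowerSeries (Fin 2) R) : MvPolynomial (Fin 2) R :=
  ∑ i ∈ range N, ∑ j ∈ range N,
    MvPolynomial.monomial (E i j) (MvPowerSeries.coeff (E i j) P)

lemma coeff_trunc2 (N : ℕ) (P : MvPowerSeries (Fin 2) R) (e : Fin 2 →₀ ℕ) :
    MvPolynomial.coeff e (trunc2 N P) =
      if e 0 < N ∧ e 1 < N then MvPowerSeries.coeff e P else 0 := by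
  classical
  rw [trunc2]
  rw [MvPolynomial.coeff_sum]
  have : ∀ i ∈ range N, MvPolynomial.coeff e (∑ j ∈ range N,
      MvPolynomial.monomial (E i j) (MvPowerSeries.coeff (E i j) P)) =
      if i = e 0 then (if e 1 < N then MvPowerSeries.coeff e P else 0) else 0 := by
    intro i _
    rw [MvPolynomial.coeff_sum]
    have h1 : ∀ j ∈ range N, MvPolynomial.coeff e (MvPolynomial.monomial (E i j)
        (MvPowerSeries.coeff (E i j) P)) =
        if j = e 1 then (if i = e 0 then MvPowerSeries.coeff e P else 0) else 0 := by
      intro j _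
      rw [MvPolynomial.coeff_monomial]
      by_cases hj : j = e 1 <;> by_cases hi : i = e 0 <;>
        simp [E_eq_iff, hi, hj, E_eta]
    rw [Finset.sum_congr rfl h1, Finset.sum_ite_eq' (range N) (e 1)]
    by_cases he1 : e 1 ∈ range N
    · rw [if_pos he1, Finset.mem_range] at *
      by_cases hi : i = e 0
      · rw [if_pos hi, if_pos he1, if_pos hi]
      · rw [if_neg hi, if_neg hi]
    · rw [if_neg he1]
      rw [Finset.mem_range] at he1
      by_cases hi : i = e 0
      · rw [if_pos hi, if_neg he1]
      · rw [if_neg hi]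
  rw [Finset.sum_congr rfl this, Finset.sum_ite_eq' (range N) (e 0)]
  by_cases he0 : e 0 ∈ range N
  · rw [if_pos he0, Finset.mem_range] at *
    by_cases he1 : e 1 < N
    · rw [if_pos he1, if_pos ⟨he0, he1⟩]
    · rw [if_neg he1, if_neg (by tauto)]
  · rw [if_neg he0, Finset.mem_range] at *
    rw [if_neg (by tauto)]

lemma coeff_phi2_congr {g₀ g₁ : MvPowerSeries σ R}
    (h₀ : constantCoeff g₀ = 0) (h₁ : constantCoeff g₁ = 0)
    {A B : MvPolynomial (Fin 2) R} {d : σ →₀ ℕ}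
    (h : ∀ e : Fin 2 →₀ ℕ, wt e ≤ wt d → MvPolynomial.coeff e A = MvPolynomial.coeff e B) :
    MvPowerSeries.coeff d (phi2 g₀ g₁ A) = MvPowerSeries.coeff d (phi2 g₀ g₁ B) := by
  have key : ∀ C : MvPolynomial (Fin 2) R,
      (∀ e : Fin 2 →₀ ℕ, wt e ≤ wt d → MvPolynomial.coeff e C = 0) →
      MvPowerSeries.coeff d (phi2 g₀ g₁ C) = 0 := by
    intro C hC
    conv_lhs => rw [C.as_sum]
    rw [map_sum, map_sum]
    apply Finset.sum_eq_zero
    intro e he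
    rw [coeff_phi2_monomial]
    rcases le_or_gt (wt e) (wt d) with h | h
    · rw [hC e h, zero_mul]
    · rw [coeff_mul_pow_eq_zero h₀ h₁ (by rw [← wt_fin2]; exact h), mul_zero]
  have h2 : MvPowerSeries.coeff d (phi2 g₀ g₁ (A - B)) = 0 := by
    apply key
    intro e he
    rw [MvPolynomial.coeff_sub, h e he, sub_self]
  rw [map_sub, map_sub] at h2
  exact sub_eq_zero.mp h2

lemma coeff_subst2_eq_phi2 (g₀ g₁ : MvPowerSeries σ R) (P : MvPowerSeries (Fin 2) R)
    (d : σ →₀ ℕ) :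
    MvPowerSeries.coeff d (subst2 g₀ g₁ P) =
      MvPowerSeries.coeff d (phi2 g₀ g₁ (trunc2 (wt d + 1) P)) := by
  rw [coeff_subst2, trunc2, map_sum, map_sum]
  apply Finset.sum_congr rfl
  intro i _
  rw [map_sum, map_sum]
  apply Finset.sum_congr rfl
  intro j _
  rw [coeff_phi2_monomial, E_apply0, E_apply1]

lemma coeff_subst2_eq_phi2' {g₀ g₁ : MvPowerSeries σ R}
    (h₀ : constantCoeff g₀ = 0) (h₁ : constantCoeff g₁ = 0)
    (P : MvPowerSeries (Fin 2) R) {d : σ →₀ ℕ} {N : ℕ} (hN : wt d < N) :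
    MvPowerSeries.coeff d (subst2 g₀ g₁ P) =
      MvPowerSeries.coeff d (phi2 g₀ g₁ (trunc2 N P)) := by
  rw [coeff_subst2_eq_phi2]
  apply coeff_phi2_congr h₀ h₁
  intro e he
  rw [coeff_trunc2, coeff_trunc2]
  have he0 : e 0 ≤ wt e := by rw [wt_fin2]; omega
  have he1 : e 1 ≤ wt e := by rw [wt_fin2]; omega
  rw [if_pos (by omega), if_pos (by omega)]

lemma subst2_mul {g₀ g₁ : MvPowerSeries σ R}
    (h₀ : constantCoeff g₀ = 0) (h₁ : constantCoeff g₁ = 0)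
    (P Q : MvPowerSeries (Fin 2) R) :
    subst2 g₀ g₁ (P * Q) = subst2 g₀ g₁ P * subst2 g₀ g₁ Q := by
  classical
  ext d
  rw [coeff_subst2_eq_phi2]
  have step1 : MvPowerSeries.coeff d (phi2 g₀ g₁ (trunc2 (wt d + 1) (P * Q))) =
      MvPowerSeries.coeff d (phi2 g₀ g₁ (trunc2 (wt d + 1) P * trunc2 (wt d + 1) Q)) := by
    apply coeff_phi2_congr h₀ h₁
    intro e he
    rw [coeff_trunc2]
    have he0 : e 0 < wt d + 1 := by rw [wt_fin2] at he; omega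
    have he1 : e 1 < wt d + 1 := by rw [wt_fin2] at he; omega
    rw [if_pos ⟨he0, he1⟩, MvPolynomial.coeff_mul, MvPowerSeries.coeff_mul]
    apply Finset.sum_congr rfl
    rintro ⟨u, w⟩ huw
    dsimp only
    rw [Finset.HasAntidiagonal.mem_antidiagonal] at huw
    have hu0 : u 0 + w 0 = e 0 := by rw [← huw]; simp
    have hu1 : u 1 + w 1 = e 1 := by rw [← huw]; simp
    rw [coeff_trunc2, coeff_trunc2, if_pos ⟨by omega, by omega⟩, if_pos ⟨by omega, by omega⟩]
  rw [step1, map_mul, MvPowerSeries.coeff_mul, MvPowerSeries.coeff_mul]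
  apply Finset.sum_congr rfl
  rintro ⟨b, c⟩ hbc
  dsimp only
  have hbc' : b + c = d := by simpa using hbc
  have hb : wt b ≤ wt d := by rw [← hbc', wt_add]; omega
  have hc : wt c ≤ wt d := by rw [← hbc', wt_add]; omega
  rw [← coeff_subst2_eq_phi2' h₀ h₁ P (by omega), ← coeff_subst2_eq_phi2' h₀ h₁ Q (by omega)]

lemma subst2_one (g₀ g₁ : MvPowerSeries σ R) : subst2 g₀ g₁ (1 : MvPowerSeries (Fin 2) R) = 1 := by
  classical
  ext d
  rw [coeff_subst2]
  have key : ∀ i ∈ range (wt d + 1), ∀ j ∈ range (wt d + 1),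
      MvPowerSeries.coeff (E i j) (1 : MvPowerSeries (Fin 2) R) *
        MvPowerSeries.coeff d (g₀ ^ i * g₁ ^ j) =
      if i = 0 then (if j = 0 then MvPowerSeries.coeff d (1 : MvPowerSeries σ R) else 0)
        else 0 := by
    intro i _ j _
    rw [MvPowerSeries.coeff_one]
    by_cases hi : i = 0 <;> by_cases hj : j = 0
    · have : E i j = 0 := by rw [hi, hj]; apply E_eq_iff.mpr; simp
      rw [if_pos this, if_pos hi, if_pos hj, hi, hj, one_mul, pow_zero, pow_zero, one_mul]
    · have : E i j ≠ 0 := by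
        intro h; obtain ⟨-, h2⟩ := E_eq_iff.mp h; simp at h2; exact hj h2
      rw [if_neg this, zero_mul, if_pos hi, if_neg hj]
    · have : E i j ≠ 0 := by
        intro h; obtain ⟨h1, -⟩ := E_eq_iff.mp h; simp at h1; exact hi h1
      rw [if_neg this, zero_mul, if_neg hi]
    · have : E i j ≠ 0 := by
        intro h; obtain ⟨h1, -⟩ := E_eq_iff.mp h; simp at h1; exact hi h1
      rw [if_neg this, zero_mul, if_neg hi]
  rw [Finset.sum_congr rfl (fun i hi => Finset.sum_congr rfl (fun j hj => key i hi j hj))]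
  have inner : ∀ i ∈ range (wt d + 1), (∑ j ∈ range (wt d + 1),
      if i = 0 then (if j = 0 then MvPowerSeries.coeff d (1 : MvPowerSeries σ R) else 0)
        else 0) =
      if i = 0 then MvPowerSeries.coeff d (1 : MvPowerSeries σ R) else 0 := by
    intro i _
    by_cases hi : i = 0
    · simp only [if_pos hi]
      rw [Finset.sum_ite_eq' (range (wt d + 1)) 0 (fun _ => MvPowerSeries.coeff d 1)]
      rw [if_pos (Finset.mem_range.mpr (by omega))]
    · simp [hi]
  rw [Finset.sum_congr rfl inner,
    Finset.sum_ite_eq' (range (wt d + 1)) 0 (fun _ => MvPowerSeries.coeff d 1),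
    if_pos (Finset.mem_range.mpr (by omega))]

lemma subst2_pow {g₀ g₁ : MvPowerSeries σ R}
    (h₀ : constantCoeff g₀ = 0) (h₁ : constantCoeff g₁ = 0)
    (P : MvPowerSeries (Fin 2) R) (k : ℕ) :
    subst2 g₀ g₁ (P ^ k) = (subst2 g₀ g₁ P) ^ k := by
  induction k with
  | zero => rw [pow_zero, pow_zero]; exact subst2_one g₀ g₁
  | succ k ih => rw [pow_succ, pow_succ, subst2_mul h₀ h₁, ih]

/-! ### one-variable machinery for `substPS` -/

lemma coeff_substPS (a : MvPowerSeries σ R) (f : PowerSeries R) (d : σ →₀ ℕ) :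
    MvPowerSeries.coeff d (substPS a f) =
      ∑ m ∈ range (wt d + 1),
        PowerSeries.coeff m f * MvPowerSeries.coeff d (a ^ m) := rfl

noncomputable def psi1 (h : MvPowerSeries σ R) : Polynomial R →+* MvPowerSeries σ R :=
  Polynomial.eval₂RingHom (MvPowerSeries.C) h

lemma coeff_psi1_monomial (h : MvPowerSeries σ R) (m : ℕ) (r : R) (d : σ →₀ ℕ) :
    MvPowerSeries.coeff d (psi1 h (Polynomial.monomial m r)) =
      r * MvPowerSeries.coeff d (h ^ m) := by
  rw [psi1, Polynomial.coe_eval₂RingHom, Polynomial.eval₂_monomial, MvPowerSeries.coeff_C_mul]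

noncomputable def trunc1 (N : ℕ) (f : PowerSeries R) : Polynomial R :=
  ∑ m ∈ range N, Polynomial.monomial m (PowerSeries.coeff m f)

lemma coeff_trunc1 (N : ℕ) (f : PowerSeries R) (m : ℕ) :
    (trunc1 N f).coeff m = if m < N then PowerSeries.coeff m f else 0 := by
  rw [trunc1, Polynomial.finset_sum_coeff]
  have : ∀ k ∈ range N, (Polynomial.monomial k (PowerSeries.coeff k f)).coeff m =
      if k = m then PowerSeries.coeff m f else 0 := by
    intro k _
    rw [Polynomial.coeff_monomial]
    by_cases hk : k = m
    · rw [if_pos hk, if_pos hk, hk]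
    · rw [if_neg hk, if_neg hk]
  rw [Finset.sum_congr rfl this, Finset.sum_ite_eq' (range N) m]
  by_cases hm : m < N
  · rw [if_pos (Finset.mem_range.mpr hm), if_pos hm]
  · rw [if_neg (fun h => hm (Finset.mem_range.mp h)), if_neg hm]

lemma coeff_psi1_congr {h : MvPowerSeries σ R} (hh : constantCoeff h = 0)
    {A B : Polynomial R} {d : σ →₀ ℕ}
    (hAB : ∀ m : ℕ, m ≤ wt d → A.coeff m = B.coeff m) :
    MvPowerSeries.coeff d (psi1 h A) = MvPowerSeries.coeff d (psi1 h B) := by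
  have key : ∀ C : Polynomial R, (∀ m : ℕ, m ≤ wt d → C.coeff m = 0) →
      MvPowerSeries.coeff d (psi1 h C) = 0 := by
    intro C hC
    conv_lhs => rw [C.as_sum_support]
    rw [map_sum, map_sum]
    apply Finset.sum_eq_zero
    intro m _
    rw [coeff_psi1_monomial]
    rcases le_or_gt m (wt d) with h' | h'
    · rw [hC m h', zero_mul]
    · rw [coeff_pow_eq_zero hh m d h', mul_zero]
  have h2 : MvPowerSeries.coeff d (psi1 h (A - B)) = 0 := by
    apply key
    intro m hm
    rw [Polynomial.coeff_sub, hAB m hm, sub_self]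
  rw [map_sub, map_sub] at h2
  exact sub_eq_zero.mp h2

lemma coeff_substPS_eq_psi1 (h : MvPowerSeries σ R) (f : PowerSeries R) (d : σ →₀ ℕ) :
    MvPowerSeries.coeff d (substPS h f) =
      MvPowerSeries.coeff d (psi1 h (trunc1 (wt d + 1) f)) := by
  rw [coeff_substPS, trunc1, map_sum, map_sum]
  apply Finset.sum_congr rfl
  intro m _
  rw [coeff_psi1_monomial]

lemma coeff_substPS_eq_psi1' {h : MvPowerSeries σ R} (hh : constantCoeff h = 0)
    (f : PowerSeries R) {d : σ →₀ ℕ} {N : ℕ} (hN : wt d < N) :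
    MvPowerSeries.coeff d (substPS h f) =
      MvPowerSeries.coeff d (psi1 h (trunc1 N f)) := by
  rw [coeff_substPS_eq_psi1]
  apply coeff_psi1_congr hh
  intro m hm
  rw [coeff_trunc1, coeff_trunc1, if_pos (by omega), if_pos (by omega)]

lemma substPS_mul {h : MvPowerSeries σ R} (hh : constantCoeff h = 0)
    (f g : PowerSeries R) :
    substPS h (f * g) = substPS h f * substPS h g := by
  classical
  ext d
  rw [coeff_substPS_eq_psi1]
  have step1 : MvPowerSeries.coeff d (psi1 h (trunc1 (wt d + 1) (f * g))) =
      MvPowerSeries.coeff d (psi1 h (trunc1 (wt d + 1) f * trunc1 (wt d + 1) g)) := by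
    apply coeff_psi1_congr hh
    intro m hm
    rw [coeff_trunc1, if_pos (by omega), Polynomial.coeff_mul, PowerSeries.coeff_mul]
    apply Finset.sum_congr rfl
    rintro ⟨u, w⟩ huw
    dsimp only
    have huw' : u + w = m := by simpa using huw
    rw [coeff_trunc1, coeff_trunc1, if_pos (by omega), if_pos (by omega)]
  rw [step1, map_mul, MvPowerSeries.coeff_mul, MvPowerSeries.coeff_mul]
  apply Finset.sum_congr rfl
  rintro ⟨b, c⟩ hbc
  dsimp only
  have hbc' : b + c = d := by simpa using hbc
  have hb : wt b ≤ wt d := by rw [← hbc', wt_add]; omega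
  have hc : wt c ≤ wt d := by rw [← hbc', wt_add]; omega
  rw [← coeff_substPS_eq_psi1' hh f (by omega), ← coeff_substPS_eq_psi1' hh g (by omega)]

lemma substPS_one (h : MvPowerSeries σ R) : substPS h (1 : PowerSeries R) = 1 := by
  ext d
  rw [coeff_substPS]
  have key : ∀ m ∈ range (wt d + 1), PowerSeries.coeff m (1 : PowerSeries R) *
      MvPowerSeries.coeff d (h ^ m) =
      if m = 0 then MvPowerSeries.coeff d (1 : MvPowerSeries σ R) else 0 := by
    intro m _
    rw [PowerSeries.coeff_one]
    by_cases hm : m = 0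
    · rw [if_pos hm, if_pos hm, hm, pow_zero, one_mul]
    · rw [if_neg hm, if_neg hm, zero_mul]
  rw [Finset.sum_congr rfl key, Finset.sum_ite_eq' (range (wt d + 1)) 0
    (fun _ => MvPowerSeries.coeff d 1), if_pos (Finset.mem_range.mpr (by omega))]

lemma substPS_pow {h : MvPowerSeries σ R} (hh : constantCoeff h = 0)
    (f : PowerSeries R) (k : ℕ) :
    substPS h (f ^ k) = (substPS h f) ^ k := by
  induction k with
  | zero => rw [pow_zero, pow_zero]; exact substPS_one h
  | succ k ih => rw [pow_succ, pow_succ, substPS_mul hh, ih]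

/-! ### small lemmas -/

lemma sum_comm3 {M : Type*} [AddCommMonoid M] {α β γ : Type*}
    (s : Finset α) (t : Finset β) (u : Finset γ) (f : α → β → γ → M) :
    ∑ i ∈ s, ∑ j ∈ t, ∑ m ∈ u, f i j m = ∑ m ∈ u, ∑ i ∈ s, ∑ j ∈ t, f i j m := by
  calc ∑ i ∈ s, ∑ j ∈ t, ∑ m ∈ u, f i j m
      = ∑ i ∈ s, ∑ m ∈ u, ∑ j ∈ t, f i j m :=
        Finset.sum_congr rfl (fun i _ => Finset.sum_comm)
    _ = ∑ m ∈ u, ∑ i ∈ s, ∑ j ∈ t, f i j m := Finset.sum_comm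

lemma wt_unit (d : Unit →₀ ℕ) : wt d = d () := by
  have h : d = Finsupp.single () (d ()) := Finsupp.unique_single d
  conv_lhs => rw [h]
  exact Finsupp.sum_single_index rfl

lemma constantCoeff_substPS (a : MvPowerSeries σ R) (f : PowerSeries R) :
    constantCoeff (substPS a f) = PowerSeries.constantCoeff f := by
  rw [← MvPowerSeries.coeff_zero_eq_constantCoeff, coeff_substPS, wt_zero,
    Finset.sum_range_one, pow_zero]
  simp [← PowerSeries.coeff_zero_eq_constantCoeff]

lemma E_zero_zero : E 0 0 = 0 := by simp [E]

lemma constantCoeff_subst2 (g₀ g₁ : MvPowerSeries σ R) (F : MvPowerSeries (Fin 2) R) :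
    constantCoeff (subst2 g₀ g₁ F) = constantCoeff F := by
  classical
  rw [← MvPowerSeries.coeff_zero_eq_constantCoeff, coeff_subst2, wt_zero,
    Finset.sum_range_one, Finset.sum_range_one, E_zero_zero, pow_zero, pow_zero, one_mul]
  simp [MvPowerSeries.coeff_one, ← MvPowerSeries.coeff_zero_eq_constantCoeff]

lemma substPS_zero_right (a : MvPowerSeries σ R) : substPS a (0 : PowerSeries R) = 0 := by
  ext d
  rw [coeff_substPS]
  simp

lemma substPS_zero_left {f : PowerSeries R} (hf : PowerSeries.constantCoeff f = 0) :
    substPS (0 : MvPowerSeries σ R) f = (0 : MvPowerSeries σ R) := by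
  ext d
  rw [coeff_substPS]
  rw [map_zero]
  apply Finset.sum_eq_zero
  intro m _
  by_cases hm : m = 0
  · subst hm
    have h0 : PowerSeries.coeff 0 f = 0 := by
      rw [PowerSeries.coeff_zero_eq_constantCoeff, hf]
    rw [h0, zero_mul]
  · rw [zero_pow hm, map_zero, mul_zero]

lemma substPS_X (f : PowerSeries R) : substPS (PowerSeries.X : PowerSeries R) f = f := by
  classical
  apply MvPowerSeries.ext
  intro d
  rw [coeff_substPS]
  have hd : d = Finsupp.single () (d ()) := Finsupp.unique_single d
  have key : ∀ m ∈ range (wt d + 1),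
      PowerSeries.coeff m f * MvPowerSeries.coeff d ((PowerSeries.X : PowerSeries R) ^ m) =
      if m = d () then PowerSeries.coeff m f else 0 := by
    intro m _
    have hX : (PowerSeries.X : PowerSeries R) ^ m = MvPowerSeries.X () ^ m := rfl
    rw [hX, MvPowerSeries.coeff_X_pow]
    by_cases hm : m = d ()
    · rw [if_pos (by rw [hm, ← hd]), if_pos hm, mul_one]
    · rw [if_neg (fun h => hm (by rw [h]; simp)), if_neg hm, mul_zero]
  rw [Finset.sum_congr rfl key,
    Finset.sum_ite_eq' (range (wt d + 1)) (d ()) (fun m => PowerSeries.coeff m f),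
    if_pos (Finset.mem_range.mpr (by rw [wt_unit]; omega))]
  conv_rhs => rw [hd]
  rfl

lemma substPS_X_inner {a : MvPowerSeries σ R} (ha : constantCoeff a = 0) :
    substPS a (PowerSeries.X : PowerSeries R) = a := by
  classical
  ext d
  rw [coeff_substPS]
  have key : ∀ m ∈ range (wt d + 1),
      PowerSeries.coeff m (PowerSeries.X : PowerSeries R) * MvPowerSeries.coeff d (a ^ m) =
      if m = 1 then MvPowerSeries.coeff d (a ^ m) else 0 := by
    intro m _
    rw [PowerSeries.coeff_X]
    by_cases hm : m = 1
    · rw [if_pos hm, if_pos hm, one_mul]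
    · rw [if_neg hm, if_neg hm, zero_mul]
  rw [Finset.sum_congr rfl key,
    Finset.sum_ite_eq' (range (wt d + 1)) 1 (fun m => MvPowerSeries.coeff d (a ^ m))]
  by_cases h1 : (1 : ℕ) ∈ range (wt d + 1)
  · rw [if_pos h1, pow_one]
  · rw [if_neg h1]
    have : wt d = 0 := by
      rw [Finset.mem_range] at h1; omega
    have hd0 : d = 0 := eq_zero_of_wt_eq_zero this
    rw [hd0, MvPowerSeries.coeff_zero_eq_constantCoeff, ha]

/-! ### substituting into f(X₀), f(X₁) -/

lemma coeff_substPS_X0 (f : PowerSeries R) (i j : ℕ) :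
    MvPowerSeries.coeff (E i j) (substPS (MvPowerSeries.X 0 : MvPowerSeries (Fin 2) R) f) =
      if j = 0 then PowerSeries.coeff i f else 0 := by
  classical
  rw [coeff_substPS, wt_E]
  have key : ∀ m ∈ range (i + j + 1),
      PowerSeries.coeff m f *
        MvPowerSeries.coeff (E i j) ((MvPowerSeries.X 0 : MvPowerSeries (Fin 2) R) ^ m) =
      if m = i then (if j = 0 then PowerSeries.coeff m f else 0) else 0 := by
    intro m _
    rw [MvPowerSeries.coeff_X_pow]
    by_cases hm : m = i <;> by_cases hj : j = 0
    · subst hm; subst hj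
      rw [if_pos, if_pos rfl, if_pos rfl, mul_one]
      rw [E, Finsupp.single_zero, add_zero]
    · rw [if_neg, if_pos hm, if_neg hj, mul_zero]
      intro h
      have := congrArg (fun e => e 1) h
      simp only [E_apply1] at this
      rw [Finsupp.single_apply] at this
      simp at this
      exact hj this
    · rw [if_neg, if_neg hm, mul_zero]
      intro h
      have := congrArg (fun e => e 0) h
      simp only [E_apply0] at this
      rw [Finsupp.single_apply] at this
      simp at this
      exact hm this.symm
    · rw [if_neg, if_neg hm, mul_zero]
      intro h
      have := congrArg (fun e => e 0) h
      simp only [E_apply0] at this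
      rw [Finsupp.single_apply] at this
      simp at this
      exact hm this.symm
  rw [Finset.sum_congr rfl key, Finset.sum_ite_eq' (range (i + j + 1)) i
    (fun m => if j = 0 then PowerSeries.coeff m f else 0),
    if_pos (Finset.mem_range.mpr (by omega))]

lemma coeff_substPS_X1 (f : PowerSeries R) (i j : ℕ) :
    MvPowerSeries.coeff (E i j) (substPS (MvPowerSeries.X 1 : MvPowerSeries (Fin 2) R) f) =
      if i = 0 then PowerSeries.coeff j f else 0 := by
  classical
  rw [coeff_substPS, wt_E]
  have key : ∀ m ∈ range (i + j + 1),
      PowerSeries.coeff m f *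
        MvPowerSeries.coeff (E i j) ((MvPowerSeries.X 1 : MvPowerSeries (Fin 2) R) ^ m) =
      if m = j then (if i = 0 then PowerSeries.coeff m f else 0) else 0 := by
    intro m _
    rw [MvPowerSeries.coeff_X_pow]
    by_cases hm : m = j <;> by_cases hi : i = 0
    · subst hm; subst hi
      rw [if_pos, if_pos rfl, if_pos rfl, mul_one]
      rw [E, Finsupp.single_zero, zero_add]
    · rw [if_neg, if_pos hm, if_neg hi, mul_zero]
      intro h
      have := congrArg (fun e => e 0) h
      simp only [E_apply0] at this
      rw [Finsupp.single_apply] at this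
      simp at this
      exact hi this
    · rw [if_neg, if_neg hm, mul_zero]
      intro h
      have := congrArg (fun e => e 1) h
      simp only [E_apply1] at this
      rw [Finsupp.single_apply] at this
      simp at this
      exact hm this.symm
    · rw [if_neg, if_neg hm, mul_zero]
      intro h
      have := congrArg (fun e => e 1) h
      simp only [E_apply1] at this
      rw [Finsupp.single_apply] at this
      simp at this
      exact hm this.symm
  rw [Finset.sum_congr rfl key, Finset.sum_ite_eq' (range (i + j + 1)) j
    (fun m => if i = 0 then PowerSeries.coeff m f else 0),
    if_pos (Finset.mem_range.mpr (by omega))]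

lemma subst2_substPS_X0 (G₀ G₁ : MvPowerSeries σ R) (f : PowerSeries R) :
    subst2 G₀ G₁ (substPS (MvPowerSeries.X 0 : MvPowerSeries (Fin 2) R) f) = substPS G₀ f := by
  ext d
  rw [coeff_subst2, coeff_substPS]
  apply Finset.sum_congr rfl
  intro i _
  have key : ∀ j ∈ range (wt d + 1),
      MvPowerSeries.coeff (E i j) (substPS (MvPowerSeries.X 0 : MvPowerSeries (Fin 2) R) f) *
        MvPowerSeries.coeff d (G₀ ^ i * G₁ ^ j) =
      if j = 0 then PowerSeries.coeff i f * MvPowerSeries.coeff d (G₀ ^ i * G₁ ^ j)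
        else 0 := by
    intro j _
    rw [coeff_substPS_X0]
    by_cases hj : j = 0
    · rw [if_pos hj, if_pos hj]
    · rw [if_neg hj, if_neg hj, zero_mul]
  rw [Finset.sum_congr rfl key, Finset.sum_ite_eq' (range (wt d + 1)) 0
    (fun j => PowerSeries.coeff i f * MvPowerSeries.coeff d (G₀ ^ i * G₁ ^ j)),
    if_pos (Finset.mem_range.mpr (by omega)), pow_zero, mul_one]

lemma subst2_substPS_X1 (G₀ G₁ : MvPowerSeries σ R) (f : PowerSeries R) :
    subst2 G₀ G₁ (substPS (MvPowerSeries.X 1 : MvPowerSeries (Fin 2) R) f) = substPS G₁ f := by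
  ext d
  rw [coeff_subst2, coeff_substPS, Finset.sum_comm]
  apply Finset.sum_congr rfl
  intro j _
  have key : ∀ i ∈ range (wt d + 1),
      MvPowerSeries.coeff (E i j) (substPS (MvPowerSeries.X 1 : MvPowerSeries (Fin 2) R) f) *
        MvPowerSeries.coeff d (G₀ ^ i * G₁ ^ j) =
      if i = 0 then PowerSeries.coeff j f * MvPowerSeries.coeff d (G₀ ^ i * G₁ ^ j)
        else 0 := by
    intro i _
    rw [coeff_substPS_X1]
    by_cases hi : i = 0
    · rw [if_pos hi, if_pos hi]
    · rw [if_neg hi, if_neg hi, zero_mul]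
  rw [Finset.sum_congr rfl key, Finset.sum_ite_eq' (range (wt d + 1)) 0
    (fun i => PowerSeries.coeff j f * MvPowerSeries.coeff d (G₀ ^ i * G₁ ^ j)),
    if_pos (Finset.mem_range.mpr (by omega)), pow_zero, one_mul]

/-! ### Lemma A : f ∘ (F(g₀,g₁)) = (f ∘ F)(g₀, g₁) -/

lemma lemA {g₀ g₁ : MvPowerSeries σ R}
    (h₀ : constantCoeff g₀ = 0) (h₁ : constantCoeff g₁ = 0)
    {F : MvPowerSeries (Fin 2) R} (hF : constantCoeff F = 0) (f : PowerSeries R) :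
    substPS (subst2 g₀ g₁ F) f = subst2 g₀ g₁ (substPS F f) := by
  classical
  ext d
  rw [coeff_substPS, coeff_subst2]
  calc
    ∑ m ∈ range (wt d + 1), PowerSeries.coeff m f *
        MvPowerSeries.coeff d (subst2 g₀ g₁ F ^ m)
      = ∑ m ∈ range (wt d + 1), ∑ i ∈ range (wt d + 1), ∑ j ∈ range (wt d + 1),
          PowerSeries.coeff m f * (MvPowerSeries.coeff (E i j) (F ^ m) *
            MvPowerSeries.coeff d (g₀ ^ i * g₁ ^ j)) := by
        apply Finset.sum_congr rfl
        intro m _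
        rw [← subst2_pow h₀ h₁, coeff_subst2, Finset.mul_sum]
        apply Finset.sum_congr rfl
        intro i _
        rw [Finset.mul_sum]
    _ = ∑ m ∈ range (2 * wt d + 1), ∑ i ∈ range (wt d + 1), ∑ j ∈ range (wt d + 1),
          PowerSeries.coeff m f * (MvPowerSeries.coeff (E i j) (F ^ m) *
            MvPowerSeries.coeff d (g₀ ^ i * g₁ ^ j)) := by
        apply Finset.sum_subset (Finset.range_subset_range.mpr (by omega))
        intro m _ hm
        rw [Finset.mem_range] at hm
        apply Finset.sum_eq_zero; intro i hi
        apply Finset.sum_eq_zero; intro j hj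
        rw [Finset.mem_range] at hi hj
        by_cases hij : i + j < m
        · rw [coeff_pow_eq_zero hF m (E i j) (by rw [wt_E]; omega), zero_mul, mul_zero]
        · rw [coeff_mul_pow_eq_zero h₀ h₁ (by omega), mul_zero, mul_zero]
    _ = ∑ i ∈ range (wt d + 1), ∑ j ∈ range (wt d + 1), ∑ m ∈ range (2 * wt d + 1),
          PowerSeries.coeff m f * (MvPowerSeries.coeff (E i j) (F ^ m) *
            MvPowerSeries.coeff d (g₀ ^ i * g₁ ^ j)) := (sum_comm3 _ _ _ _).symm
    _ = ∑ i ∈ range (wt d + 1), ∑ j ∈ range (wt d + 1),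
          MvPowerSeries.coeff (E i j) (substPS F f) *
            MvPowerSeries.coeff d (g₀ ^ i * g₁ ^ j) := by
        apply Finset.sum_congr rfl; intro i hi
        apply Finset.sum_congr rfl; intro j hj
        rw [Finset.mem_range] at hi hj
        rw [coeff_substPS, wt_E, Finset.sum_mul]
        rw [← Finset.sum_subset (Finset.range_subset_range.mpr (show i + j + 1 ≤ 2 * wt d + 1 by omega))]
        · apply Finset.sum_congr rfl
          intro m _
          rw [mul_assoc]
        · intro m _ hm
          rw [Finset.mem_range] at hm
          rw [coeff_pow_eq_zero hF m (E i j) (by rw [wt_E]; omega), zero_mul, mul_zero]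

lemma sum_comm4 {M : Type*} [AddCommMonoid M] {α β γ δ : Type*}
    (s : Finset α) (t : Finset β) (u : Finset γ) (v : Finset δ) (f : α → β → γ → δ → M) :
    ∑ i ∈ s, ∑ j ∈ t, ∑ k ∈ u, ∑ l ∈ v, f i j k l =
      ∑ k ∈ u, ∑ l ∈ v, ∑ i ∈ s, ∑ j ∈ t, f i j k l := by
  calc ∑ i ∈ s, ∑ j ∈ t, ∑ k ∈ u, ∑ l ∈ v, f i j k l
      = ∑ i ∈ s, ∑ l ∈ v, ∑ j ∈ t, ∑ k ∈ u, f i j k l :=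
        Finset.sum_congr rfl (fun i _ => sum_comm3 t u v _)
    _ = ∑ l ∈ v, ∑ i ∈ s, ∑ j ∈ t, ∑ k ∈ u, f i j k l := Finset.sum_comm
    _ = ∑ l ∈ v, ∑ k ∈ u, ∑ i ∈ s, ∑ j ∈ t, f i j k l :=
        Finset.sum_congr rfl (fun l _ => sum_comm3 s t u _)
    _ = ∑ k ∈ u, ∑ l ∈ v, ∑ i ∈ s, ∑ j ∈ t, f i j k l := Finset.sum_comm

/-! ### Lemma B : associativity F(h₀,h₁)(G₀,G₁) = F(h₀(G), h₁(G)) -/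

lemma lemB {G₀ G₁ : MvPowerSeries σ R}
    (hG₀ : constantCoeff G₀ = 0) (hG₁ : constantCoeff G₁ = 0)
    {h₀ h₁ : MvPowerSeries (Fin 2) R}
    (hh₀ : constantCoeff h₀ = 0) (hh₁ : constantCoeff h₁ = 0)
    (F : MvPowerSeries (Fin 2) R) :
    subst2 G₀ G₁ (subst2 h₀ h₁ F) =
      subst2 (subst2 G₀ G₁ h₀) (subst2 G₀ G₁ h₁) F := by
  classical
  ext d
  rw [coeff_subst2, coeff_subst2]
  calc
    ∑ i ∈ range (wt d + 1), ∑ j ∈ range (wt d + 1),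
        MvPowerSeries.coeff (E i j) (subst2 h₀ h₁ F) *
          MvPowerSeries.coeff d (G₀ ^ i * G₁ ^ j)
      = ∑ i ∈ range (wt d + 1), ∑ j ∈ range (wt d + 1),
          ∑ k ∈ range (2 * wt d + 1), ∑ l ∈ range (2 * wt d + 1),
            MvPowerSeries.coeff (E k l) F * (MvPowerSeries.coeff (E i j) (h₀ ^ k * h₁ ^ l) *
              MvPowerSeries.coeff d (G₀ ^ i * G₁ ^ j)) := by
        apply Finset.sum_congr rfl; intro i hi
        apply Finset.sum_congr rfl; intro j hj
        rw [Finset.mem_range] at hi hj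
        rw [coeff_subst2, wt_E, Finset.sum_mul]
        rw [← Finset.sum_subset
          (Finset.range_subset_range.mpr (show i + j + 1 ≤ 2 * wt d + 1 by omega))]
        · apply Finset.sum_congr rfl; intro k hk
          rw [Finset.mem_range] at hk
          rw [Finset.sum_mul]
          rw [← Finset.sum_subset
            (Finset.range_subset_range.mpr (show i + j + 1 ≤ 2 * wt d + 1 by omega))]
          · apply Finset.sum_congr rfl; intro l _
            rw [mul_assoc]
          · intro l _ hl
            rw [Finset.mem_range] at hl
            rw [coeff_mul_pow_eq_zero hh₀ hh₁ (by rw [wt_E]; omega), zero_mul, mul_zero]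
        · intro k _ hk
          rw [Finset.mem_range] at hk
          apply Finset.sum_eq_zero; intro l _
          rw [coeff_mul_pow_eq_zero hh₀ hh₁ (by rw [wt_E]; omega), zero_mul, mul_zero]
    _ = ∑ k ∈ range (2 * wt d + 1), ∑ l ∈ range (2 * wt d + 1),
          ∑ i ∈ range (wt d + 1), ∑ j ∈ range (wt d + 1),
            MvPowerSeries.coeff (E k l) F * (MvPowerSeries.coeff (E i j) (h₀ ^ k * h₁ ^ l) *
              MvPowerSeries.coeff d (G₀ ^ i * G₁ ^ j)) := sum_comm4 _ _ _ _ _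
    _ = ∑ k ∈ range (wt d + 1), ∑ l ∈ range (wt d + 1),
          MvPowerSeries.coeff (E k l) F *
            MvPowerSeries.coeff d ((subst2 G₀ G₁ h₀) ^ k * (subst2 G₀ G₁ h₁) ^ l) := by
        symm
        rw [← Finset.sum_subset (Finset.range_subset_range.mpr (show wt d + 1 ≤ 2 * wt d + 1 by omega))]
        · apply Finset.sum_congr rfl; intro k _
          rw [← Finset.sum_subset
            (Finset.range_subset_range.mpr (show wt d + 1 ≤ 2 * wt d + 1 by omega))]
          · apply Finset.sum_congr rfl; intro l _
            rw [← subst2_pow hG₀ hG₁, ← subst2_pow hG₀ hG₁, ← subst2_mul hG₀ hG₁,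
              coeff_subst2, Finset.mul_sum]
            apply Finset.sum_congr rfl; intro i _
            rw [Finset.mul_sum]
          · intro l _ hl
            rw [Finset.mem_range] at hl
            apply Finset.sum_eq_zero; intro i hi
            apply Finset.sum_eq_zero; intro j hj
            rw [Finset.mem_range] at hi hj
            by_cases hij : i + j < k + l
            · rw [coeff_mul_pow_eq_zero hh₀ hh₁ (by rw [wt_E]; omega), zero_mul, mul_zero]
            · rw [coeff_mul_pow_eq_zero hG₀ hG₁ (by omega), mul_zero, mul_zero]
        · intro k _ hk
          rw [Finset.mem_range] at hk
          apply Finset.sum_eq_zero; intro l _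
          apply Finset.sum_eq_zero; intro i hi
          apply Finset.sum_eq_zero; intro j hj
          rw [Finset.mem_range] at hi hj
          by_cases hij : i + j < k + l
          · rw [coeff_mul_pow_eq_zero hh₀ hh₁ (by rw [wt_E]; omega), zero_mul, mul_zero]
          · rw [coeff_mul_pow_eq_zero hG₀ hG₁ (by omega), mul_zero, mul_zero]

/-! ### Lemma C : (F(g₀,g₁))(h) = F(g₀(h), g₁(h)) for one-variable g's -/

lemma wt_single (m : ℕ) : wt (Finsupp.single () m) = m := Finsupp.sum_single_index rfl

lemma coeff_subst2_unit (g₀ g₁ : PowerSeries R) (F : MvPowerSeries (Fin 2) R) (m : ℕ) :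
    PowerSeries.coeff m (subst2 g₀ g₁ F) =
      ∑ i ∈ range (m + 1), ∑ j ∈ range (m + 1),
        MvPowerSeries.coeff (E i j) F * PowerSeries.coeff m (g₀ ^ i * g₁ ^ j) := by
  have h : PowerSeries.coeff m (subst2 g₀ g₁ F) =
      MvPowerSeries.coeff (Finsupp.single () m) (subst2 g₀ g₁ F) := rfl
  rw [h, coeff_subst2, wt_single]
  rfl

lemma lemC {h : MvPowerSeries σ R} (hh : constantCoeff h = 0)
    {g₀ g₁ : PowerSeries R}
    (hg₀ : PowerSeries.constantCoeff g₀ = 0) (hg₁ : PowerSeries.constantCoeff g₁ = 0)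
    (F : MvPowerSeries (Fin 2) R) :
    substPS h (subst2 g₀ g₁ F) = subst2 (substPS h g₀) (substPS h g₁) F := by
  classical
  have hg₀' : constantCoeff g₀ = 0 := hg₀
  have hg₁' : constantCoeff g₁ = 0 := hg₁
  ext d
  rw [coeff_substPS, coeff_subst2]
  calc
    ∑ m ∈ range (wt d + 1), PowerSeries.coeff m (subst2 g₀ g₁ F) *
        MvPowerSeries.coeff d (h ^ m)
      = ∑ m ∈ range (wt d + 1), ∑ i ∈ range (wt d + 1), ∑ j ∈ range (wt d + 1),
          MvPowerSeries.coeff (E i j) F * (PowerSeries.coeff m (g₀ ^ i * g₁ ^ j) *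
            MvPowerSeries.coeff d (h ^ m)) := by
        apply Finset.sum_congr rfl; intro m hm
        rw [Finset.mem_range] at hm
        rw [coeff_subst2_unit, Finset.sum_mul]
        rw [← Finset.sum_subset (Finset.range_subset_range.mpr (show m + 1 ≤ wt d + 1 by omega))]
        · apply Finset.sum_congr rfl; intro i _
          rw [Finset.sum_mul]
          rw [← Finset.sum_subset (Finset.range_subset_range.mpr (show m + 1 ≤ wt d + 1 by omega))]
          · apply Finset.sum_congr rfl; intro j _
            rw [mul_assoc]
          · intro j _ hj
            rw [Finset.mem_range] at hj
            have : PowerSeries.coeff m (g₀ ^ i * g₁ ^ j) = 0 := by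
              have := coeff_mul_pow_eq_zero hg₀' hg₁'
                (d := Finsupp.single () m) (i := i) (j := j) (by rw [wt_single]; omega)
              exact this
            rw [this, zero_mul, mul_zero]
        · intro i _ hi
          rw [Finset.mem_range] at hi
          apply Finset.sum_eq_zero; intro j _
          have : PowerSeries.coeff m (g₀ ^ i * g₁ ^ j) = 0 := by
            have := coeff_mul_pow_eq_zero hg₀' hg₁'
              (d := Finsupp.single () m) (i := i) (j := j) (by rw [wt_single]; omega)
            exact this
          rw [this, zero_mul, mul_zero]
    _ = ∑ i ∈ range (wt d + 1), ∑ j ∈ range (wt d + 1), ∑ m ∈ range (wt d + 1),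
          MvPowerSeries.coeff (E i j) F * (PowerSeries.coeff m (g₀ ^ i * g₁ ^ j) *
            MvPowerSeries.coeff d (h ^ m)) := (sum_comm3 _ _ _ _).symm
    _ = ∑ i ∈ range (wt d + 1), ∑ j ∈ range (wt d + 1),
          MvPowerSeries.coeff (E i j) F *
            MvPowerSeries.coeff d ((substPS h g₀) ^ i * (substPS h g₁) ^ j) := by
        apply Finset.sum_congr rfl; intro i _
        apply Finset.sum_congr rfl; intro j _
        rw [← substPS_pow hh, ← substPS_pow hh, ← substPS_mul hh, coeff_substPS, Finset.mul_sum]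

/-! ### characteristic p coefficient lemma -/

lemma coeff_pow_char_pow {p : ℕ} [Fact p.Prime] [CharP R p] (n k : ℕ) (g : PowerSeries R) :
    PowerSeries.coeff (p ^ n * k) (g ^ (p ^ n)) = (PowerSeries.coeff k g) ^ (p ^ n) := by
  classical
  haveI : CharP (PowerSeries R) p := charP_of_injective_ringHom
    (f := PowerSeries.C) (fun a b hab => by
      have := congrArg (PowerSeries.constantCoeff) hab
      simpa using this) p
  set q := p ^ n with hqdef
  have hq : 0 < q := pow_pos (Fact.out : p.Prime).pos n
  set t : PowerSeries R := ∑ m ∈ range (q * k + 1),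
    PowerSeries.C (PowerSeries.coeff m g) * PowerSeries.X ^ m with ht_def
  have ht : ∀ j ≤ q * k, PowerSeries.coeff j t = PowerSeries.coeff j g := by
    intro j hj
    rw [ht_def, map_sum]
    have key : ∀ m ∈ range (q * k + 1),
        PowerSeries.coeff j (PowerSeries.C (PowerSeries.coeff m g) * PowerSeries.X ^ m) =
        if j = m then PowerSeries.coeff m g else 0 := by
      intro m _
      rw [PowerSeries.coeff_C_mul, PowerSeries.coeff_X_pow]
      by_cases hm : j = m
      · rw [if_pos hm, if_pos hm, mul_one]
      · rw [if_neg hm, if_neg hm, mul_zero]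
    rw [Finset.sum_congr rfl key]
    have : ∀ m ∈ range (q * k + 1), (if j = m then PowerSeries.coeff m g else 0) =
        if j = m then PowerSeries.coeff j g else 0 := by
      intro m _
      by_cases hm : j = m
      · rw [if_pos hm, if_pos hm, hm]
      · rw [if_neg hm, if_neg hm]
    rw [Finset.sum_congr rfl this, Finset.sum_ite_eq (range (q * k + 1)) j
      (fun _ => PowerSeries.coeff j g), if_pos (Finset.mem_range.mpr (by omega))]
  have hr : ∀ j ≤ q * k, PowerSeries.coeff j (g - t) = 0 := by
    intro j hj
    rw [map_sub, ht j hj, sub_self]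
  have hlow : ∀ w : PowerSeries R, PowerSeries.coeff (q * k) ((g - t) * w) = 0 := by
    intro w
    rw [PowerSeries.coeff_mul]
    apply Finset.sum_eq_zero
    rintro ⟨u, u'⟩ hu
    dsimp only
    have hu' : u + u' = q * k := by simpa using hu
    rw [hr u (by omega), zero_mul]
  have hdecomp : g = t + (g - t) := by ring
  have step1 : PowerSeries.coeff (q * k) (g ^ q) = PowerSeries.coeff (q * k) (t ^ q) := by
    conv_lhs => rw [hdecomp]
    rw [add_pow, map_sum]
    have key : ∀ i ∈ range (q + 1),
        PowerSeries.coeff (q * k) (t ^ i * (g - t) ^ (q - i) * (q.choose i : PowerSeries R)) =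
        if i = q then PowerSeries.coeff (q * k) (t ^ q) else 0 := by
      intro i hi
      rw [Finset.mem_range] at hi
      by_cases hiq : i = q
      · rw [if_pos hiq, hiq, Nat.sub_self, pow_zero, mul_one, Nat.choose_self, Nat.cast_one,
          mul_one]
      · rw [if_neg hiq]
        obtain ⟨s, hs⟩ : ∃ s, q - i = s + 1 := ⟨q - i - 1, by omega⟩
        have h2 : t ^ i * (g - t) ^ (q - i) * (q.choose i : PowerSeries R) =
            (g - t) * (t ^ i * (g - t) ^ s * (q.choose i : PowerSeries R)) := by
          rw [hs, pow_succ]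
          ring
        rw [h2, hlow]
    rw [Finset.sum_congr rfl key, Finset.sum_ite_eq' (range (q + 1)) q
      (fun _ => PowerSeries.coeff (q * k) (t ^ q)), if_pos (Finset.mem_range.mpr (by omega))]
  have step2 : t ^ q = ∑ m ∈ range (q * k + 1),
      PowerSeries.C ((PowerSeries.coeff m g) ^ q) * PowerSeries.X ^ (m * q) := by
    rw [ht_def, hqdef, sum_pow_char_pow]
    apply Finset.sum_congr rfl
    intro m _
    rw [mul_pow, ← map_pow, ← pow_mul]
  rw [step1, step2, map_sum]
  have key : ∀ m ∈ range (q * k + 1),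
      PowerSeries.coeff (q * k)
        (PowerSeries.C ((PowerSeries.coeff m g) ^ q) * PowerSeries.X ^ (m * q)) =
      if m = k then (PowerSeries.coeff m g) ^ q else 0 := by
    intro m _
    rw [PowerSeries.coeff_C_mul, PowerSeries.coeff_X_pow]
    by_cases hm : m = k
    · rw [if_pos hm, if_pos (by rw [hm]; ring), mul_one]
    · have hne : q * k ≠ m * q := by
        intro h
        apply hm
        have h2 : q * m = q * k := by rw [mul_comm q m, ← h]
        exact Nat.eq_of_mul_eq_mul_left hq h2
      rw [if_neg hne, mul_zero, if_neg hm]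
  rw [Finset.sum_congr rfl key, Finset.sum_ite_eq' (range (q * k + 1)) k
    (fun m => (PowerSeries.coeff m g) ^ q),
    if_pos (Finset.mem_range.mpr (by
      have : k ≤ q * k := Nat.le_mul_of_pos_left k hq
      omega))]

/-! ### evaluating C v * X^q at f, and its coefficients -/

lemma substPS_C_mul_X_pow {f : PowerSeries R} (hf : PowerSeries.constantCoeff f = 0)
    (v : R) (q : ℕ) :
    substPS f (PowerSeries.C v * PowerSeries.X ^ q) = PowerSeries.C v * f ^ q := by
  classical
  have hf' : constantCoeff f = 0 := hf
  apply MvPowerSeries.ext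
  intro d
  rw [coeff_substPS]
  have key : ∀ m ∈ range (wt d + 1),
      PowerSeries.coeff m (PowerSeries.C v * PowerSeries.X ^ q) *
        MvPowerSeries.coeff d (f ^ m) =
      if m = q then v * MvPowerSeries.coeff d (f ^ m) else 0 := by
    intro m _
    rw [PowerSeries.coeff_C_mul, PowerSeries.coeff_X_pow]
    by_cases hm : m = q
    · rw [if_pos hm, if_pos hm, mul_one]
    · rw [if_neg hm, if_neg hm, mul_zero, zero_mul]
  rw [Finset.sum_congr rfl key, Finset.sum_ite_eq' (range (wt d + 1)) q
    (fun m => v * MvPowerSeries.coeff d (f ^ m))]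
  have hC : (PowerSeries.C v * f ^ q : PowerSeries R) =
      (MvPowerSeries.C v) * f ^ q := rfl
  rw [hC, MvPowerSeries.coeff_C_mul]
  by_cases hq : q ∈ range (wt d + 1)
  · rw [if_pos hq]
  · rw [if_neg hq]
    rw [Finset.mem_range] at hq
    rw [coeff_pow_eq_zero hf' q d (by omega), mul_zero]

lemma coeff_substPS_C_mul_X_pow (v : R) {q : ℕ} (hq : 0 < q) (f : PowerSeries R) (m : ℕ) :
    PowerSeries.coeff (m * q) (substPS (PowerSeries.C v * PowerSeries.X ^ q) f) =
      PowerSeries.coeff m f * v ^ m := by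
  classical
  have h0 : PowerSeries.coeff (m * q) (substPS (PowerSeries.C v * PowerSeries.X ^ q) f) =
      MvPowerSeries.coeff (Finsupp.single () (m * q))
        (substPS (PowerSeries.C v * PowerSeries.X ^ q) f) := rfl
  rw [h0, coeff_substPS, wt_single]
  have key : ∀ m' ∈ range (m * q + 1),
      PowerSeries.coeff m' f * MvPowerSeries.coeff (Finsupp.single () (m * q))
        ((PowerSeries.C v * PowerSeries.X ^ q) ^ m') =
      if m' = m then PowerSeries.coeff m' f * v ^ m' else 0 := by
    intro m' _
    have hpow : (PowerSeries.C v * PowerSeries.X ^ q) ^ m' =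
        PowerSeries.C (v ^ m') * PowerSeries.X ^ (q * m') := by
      rw [mul_pow, ← map_pow, ← pow_mul]
    have hcoe : MvPowerSeries.coeff (Finsupp.single () (m * q))
        (PowerSeries.C (v ^ m') * PowerSeries.X ^ (q * m')) =
        PowerSeries.coeff (m * q) (PowerSeries.C (v ^ m') * PowerSeries.X ^ (q * m')) := rfl
    rw [hpow, hcoe, PowerSeries.coeff_C_mul, PowerSeries.coeff_X_pow]
    by_cases hm : m' = m
    · rw [if_pos hm, if_pos (by rw [hm, mul_comm]), mul_one, hm]
    · have hne : m * q ≠ q * m' := by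
        intro h
        apply hm
        have h2 : q * m' = q * m := by rw [← h, mul_comm]
        exact (Nat.eq_of_mul_eq_mul_left hq h2)
      rw [if_neg hne, mul_zero, mul_zero, if_neg hm]
  rw [Finset.sum_congr rfl key, Finset.sum_ite_eq' (range (m * q + 1)) m
    (fun m' => PowerSeries.coeff m' f * v ^ m'),
    if_pos (Finset.mem_range.mpr (by
      have : m ≤ m * q := Nat.le_mul_of_pos_right m hq
      omega))]

/-- Let `p` be a prime, `n ≥ 1`, `R` a commutative ring with `p·1 = 0`, and
`v ∈ R`.  Let `F ∈ R⟦X,Y⟧` be a formal group law whose `p`-series is `[p]_F(X) = v·X^(p^n)`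
(the `m`-series being defined by `[0]_F = 0`, `[m+1]_F(X) = F([m]_F(X), X)`).  Then every
`f ∈ R⟦X⟧` with zero constant term satisfying `f(F(X,Y)) = F(f(X), f(Y))` obeys
`f(v·X^(p^n)) = v·(f(X))^(p^n)`; consequently, writing `f = Σ_{m≥1} a_m X^m`, one has
`v·a_m^(p^n) = v^m·a_m` for all `m ≥ 1`. -/
theorem stmt_13 (p n : ℕ) (hp : p.Prime) (hn : 1 ≤ n)
    (R : Type) [CommRing R] (hpR : (p : R) = 0) (v : R)
    (F : MvPowerSeries (Fin 2) R)
    (hF0 : MvPowerSeries.constantCoeff F = 0)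
    (hFX : subst2 (MvPowerSeries.X 0) 0 F = (MvPowerSeries.X 0 : MvPowerSeries (Fin 2) R))
    (hFY : subst2 0 (MvPowerSeries.X 1) F = (MvPowerSeries.X 1 : MvPowerSeries (Fin 2) R))
    (hFcomm : subst2 (MvPowerSeries.X 1) (MvPowerSeries.X 0) F = F)
    (hFassoc :
      subst2 (subst2 (MvPowerSeries.X 0) (MvPowerSeries.X 1) F)
          (MvPowerSeries.X 2 : MvPowerSeries (Fin 3) R) F =
        subst2 (MvPowerSeries.X 0 : MvPowerSeries (Fin 3) R)
          (subst2 (MvPowerSeries.X 1) (MvPowerSeries.X 2) F) F)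
    -- the m-series of F, and the hypothesis that the p-series is v·X^(p^n)
    (ms : ℕ → PowerSeries R)
    (hms0 : ms 0 = 0)
    (hmsS : ∀ m, ms (m + 1) = subst2 (ms m) PowerSeries.X F)
    (hp_series : ms p = PowerSeries.C v * PowerSeries.X ^ (p ^ n)) :
    ∀ f : PowerSeries R, PowerSeries.constantCoeff f = 0 →
      substPS F f =
        subst2 (substPS (MvPowerSeries.X 0 : MvPowerSeries (Fin 2) R) f)
          (substPS (MvPowerSeries.X 1 : MvPowerSeries (Fin 2) R) f) F →
      (substPS (PowerSeries.C v * PowerSeries.X ^ (p ^ n)) f =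
        PowerSeries.C v * f ^ (p ^ n)) ∧
      (∀ m : ℕ, 1 ≤ m → v * (PowerSeries.coeff m f) ^ (p ^ n) =
        v ^ m * PowerSeries.coeff m f) := by
  intro f hf hcomm
  have hms_const : ∀ m, PowerSeries.constantCoeff (ms m) = 0 := by
    intro m
    induction m with
    | zero => rw [hms0]; exact map_zero _
    | succ m ih =>
      rw [hmsS]
      exact (constantCoeff_subst2 (ms m) PowerSeries.X F).trans hF0
  have hXc : PowerSeries.constantCoeff (PowerSeries.X : PowerSeries R) = 0 :=
    PowerSeries.constantCoeff_X
  have hfX0 : MvPowerSeries.constantCoeff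
      (substPS (MvPowerSeries.X 0 : MvPowerSeries (Fin 2) R) f) = 0 := by
    rw [constantCoeff_substPS, hf]
  have hfX1 : MvPowerSeries.constantCoeff
      (substPS (MvPowerSeries.X 1 : MvPowerSeries (Fin 2) R) f) = 0 := by
    rw [constantCoeff_substPS, hf]
  have key : ∀ m, substPS (ms m) f = substPS f (ms m) := by
    intro m
    induction m with
    | zero => rw [hms0, substPS_zero_left hf, substPS_zero_right]
    | succ m ih =>
      rw [hmsS]
      calc substPS (subst2 (ms m) PowerSeries.X F) f
          = subst2 (ms m) PowerSeries.X (substPS F f) := lemA (hms_const m) hXc hF0 f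
        _ = subst2 (ms m) PowerSeries.X
            (subst2 (substPS (MvPowerSeries.X 0 : MvPowerSeries (Fin 2) R) f)
              (substPS (MvPowerSeries.X 1 : MvPowerSeries (Fin 2) R) f) F) := by rw [hcomm]
        _ = subst2
            (subst2 (ms m) PowerSeries.X
              (substPS (MvPowerSeries.X 0 : MvPowerSeries (Fin 2) R) f))
            (subst2 (ms m) PowerSeries.X
              (substPS (MvPowerSeries.X 1 : MvPowerSeries (Fin 2) R) f)) F :=
          lemB (hms_const m) hXc hfX0 hfX1 F
        _ = subst2 (substPS (ms m) f) (substPS PowerSeries.X f) F := by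
          rw [subst2_substPS_X0, subst2_substPS_X1]
        _ = subst2 (substPS f (ms m)) (substPS f PowerSeries.X) F := by
          rw [substPS_X, ih, substPS_X_inner hf]
        _ = substPS f (subst2 (ms m) PowerSeries.X F) := (lemC hf (hms_const m) hXc F).symm
  have goal1 : substPS (PowerSeries.C v * PowerSeries.X ^ (p ^ n)) f =
      PowerSeries.C v * f ^ (p ^ n) := by
    rw [← hp_series, key p, hp_series]
    exact substPS_C_mul_X_pow hf v (p ^ n)
  refine ⟨goal1, ?_⟩
  intro m hm
  rcases subsingleton_or_nontrivial R with hR | hR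
  · exact Subsingleton.elim _ _
  · haveI := Fact.mk hp
    haveI : CharP R p := (CharP.charP_iff_prime_eq_zero hp).mpr hpR
    have hq : 0 < p ^ n := pow_pos hp.pos n
    have h1 := congrArg (PowerSeries.coeff (m * p ^ n)) goal1
    rw [coeff_substPS_C_mul_X_pow v hq f m, PowerSeries.coeff_C_mul] at h1
    have h2 : PowerSeries.coeff (m * p ^ n) (f ^ (p ^ n)) =
        (PowerSeries.coeff m f) ^ (p ^ n) := by
      rw [mul_comm m (p ^ n)]
      exact coeff_pow_char_pow n m f
    rw [h2] at h1
    linear_combination -h1
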